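/- Let p be a prime and r ≥ 1, and let a, b, c be nonzero integers with v_p(a) = v_p(b) = v_p(a+b) = 0 and v_p(c) ≥ r. Let g be the residue of −a·b⁻¹ in the multiplicative group (ℤ/p^r)ˣ. Then g is not the identity of (ℤ/p^r)ˣ, and the functional graph on (ℤ/p^r)ˣ with edges {x, gx} is a disjoint union of cycles each of which has length equal to ord(g) divided by some power of p; in particular, if ord(g) is even this graph is properly 2-colorable, and it is always properly 3-colorable. -/

import Mathlib

open Subgroup

lemma exists_index_stmt17 {G : Type*} [CommGroup G] (g : G) :
    ∃ n : G → ZMod (orderOf g), ∀ x, n (g * x) = n x + 1 := by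
  classical
  have key : ∀ x : G, ∃ k : ℤ, g ^ k = x⁻¹ * (QuotientGroup.mk (s := zpowers g) x).out := by
    intro x
    have h : (QuotientGroup.mk (s := zpowers g) x)
        = QuotientGroup.mk ((QuotientGroup.mk (s := zpowers g) x).out) :=
      (Quotient.out_eq _).symm
    rw [QuotientGroup.eq] at h
    exact mem_zpowers_iff.mp h
  refine ⟨fun x => (-(Classical.choose (key x)) : ℤ), fun x => ?_⟩
  have hout : (QuotientGroup.mk (s := zpowers g) (g * x)).out
      = (QuotientGroup.mk (s := zpowers g) x).out := by
    congr 1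
    rw [QuotientGroup.eq]
    refine mem_zpowers_iff.mpr ⟨-1, ?_⟩
    simp [zpow_neg, mul_inv_rev, mul_comm, mul_assoc, mul_left_comm]
  have h1 := Classical.choose_spec (key (g * x))
  have h2 := Classical.choose_spec (key x)
  set k1 := Classical.choose (key (g * x)) with hk1
  set k2 := Classical.choose (key x) with hk2
  have heq : g ^ k1 = g ^ (k2 - 1) := by
    rw [h1, hout, zpow_sub, zpow_one, h2, mul_inv_rev]
    simp [div_eq_mul_inv, mul_comm, mul_assoc, mul_left_comm]
  have hmod : k1 ≡ k2 - 1 [ZMOD orderOf g] := zpow_eq_zpow_iff_modEq.mp heq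
  have hc : ((k1 : ℤ) : ZMod (orderOf g)) = ((k2 - 1 : ℤ) : ZMod (orderOf g)) :=
    (ZMod.intCast_eq_intCast_iff _ _ _).mpr hmod
  show ((-k1 : ℤ) : ZMod (orderOf g)) = ((-k2 : ℤ) : ZMod (orderOf g)) + 1
  push_cast at hc ⊢
  rw [hc]; ring

lemma natkey3_stmt17 (m v : ℕ) (hm : 2 ≤ m) (hv : v < m) :
    (if (v + 1) % m = m - 1 then 2 else ((v + 1) % m) % 2)
      ≠ (if v = m - 1 then 2 else v % 2) := by
  rcases eq_or_ne v (m - 1) with h | h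
  · have h1 : v + 1 = m := by omega
    rw [h1, Nat.mod_self]
    split <;> (try split) <;> omega
  · rw [Nat.mod_eq_of_lt (by omega : v + 1 < m)]
    split <;> (try split) <;> omega

lemma natkey2_stmt17 (m v : ℕ) (hm : Even m) (h2 : 2 ≤ m) (hv : v < m) :
    (v + 1) % m % 2 ≠ v % 2 := by
  obtain ⟨t, rfl⟩ := hm
  rcases eq_or_ne (v + 1) (t + t) with h | h
  · rw [h, Nat.mod_self]; omega
  · rw [Nat.mod_eq_of_lt (show v + 1 < t + t by omega)]; omega

/-- Let `p` be a prime, `r ≥ 1`, and `a, b, c` nonzero integers with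
`v_p(a) = v_p(b) = v_p(a+b) = 0` and `v_p(c) ≥ r`. If `g ∈ (ℤ/p^r)ˣ` is the
residue of `-a·b⁻¹`, then `g ≠ 1`; each cycle of the functional graph
`x ↦ g·x` on `(ℤ/p^r)ˣ` has length `ord(g)` divided by some power of `p`;
if `ord(g)` is even the graph is properly 2-colorable; and it is always
properly 3-colorable. -/
theorem stmt_17 (p : ℕ) (hp : p.Prime) (r : ℕ) (hr : 1 ≤ r)
    (a b c : ℤ) (ha : a ≠ 0) (hb : b ≠ 0) (hc : c ≠ 0)
    (hva : padicValInt p a = 0) (hvb : padicValInt p b = 0)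
    (hvab : a + b ≠ 0 ∧ padicValInt p (a + b) = 0)
    (hvc : r ≤ padicValInt p c)
    (g : (ZMod (p ^ r))ˣ)
    (hg : (g : ZMod (p ^ r)) * (b : ZMod (p ^ r)) = -(a : ZMod (p ^ r))) :
    g ≠ 1 ∧
    (∀ x : (ZMod (p ^ r))ˣ, ∃ i : ℕ,
      p ^ i * Set.ncard {y : (ZMod (p ^ r))ˣ | ∃ n : ℤ, y = g ^ n * x}
        = orderOf g) ∧
    (Even (orderOf g) →
      (SimpleGraph.fromRel (fun x y : (ZMod (p ^ r))ˣ => y = g * x)).Colorable 2) ∧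
    (SimpleGraph.fromRel (fun x y : (ZMod (p ^ r))ˣ => y = g * x)).Colorable 3 := by
  haveI : NeZero (p ^ r) := NeZero.of_pos (pow_pos hp.pos r)
  haveI : Fact p.Prime := ⟨hp⟩
  -- g ≠ 1
  have hne1 : g ≠ 1 := by
    intro h1
    rw [h1, Units.val_one, one_mul] at hg
    have hz : ((a + b : ℤ) : ZMod (p ^ r)) = 0 := by push_cast; rw [hg]; ring
    rw [ZMod.intCast_zmod_eq_zero_iff_dvd] at hz
    have hdvd : (p : ℤ) ∣ a + b := by
      refine dvd_trans ?_ hz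
      push_cast
      exact dvd_pow_self _ (by omega)
    have hdvd' : p ∣ (a + b).natAbs := by
      have := Int.natAbs_dvd_natAbs.mpr hdvd
      simpa using this
    have h1le := one_le_padicValNat_of_dvd (Int.natAbs_ne_zero.mpr hvab.1) hdvd'
    have h0 : padicValNat p (a + b).natAbs = 0 := hvab.2
    omega
  -- order facts
  have hm0 : orderOf g ≠ 0 := (orderOf_pos g).ne'
  have hm1 : orderOf g ≠ 1 := fun h => hne1 (orderOf_eq_one_iff.mp h)
  have hm2 : 2 ≤ orderOf g := by omega
  haveI : NeZero (orderOf g) := ⟨hm0⟩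
  haveI : Fact (1 < orderOf g) := ⟨by omega⟩
  obtain ⟨n, hn⟩ := exists_index_stmt17 g
  have hvlt : ∀ x : (ZMod (p ^ r))ˣ, (n x).val < orderOf g := fun x => ZMod.val_lt _
  have hval : ∀ x : (ZMod (p ^ r))ˣ,
      (n (g * x)).val = ((n x).val + 1) % orderOf g := by
    intro x
    rw [hn x, ZMod.val_add, ZMod.val_one]
  refine ⟨hne1, ?_, ?_, ?_⟩
  · -- orbits
    intro x
    refine ⟨0, ?_⟩
    rw [pow_zero, one_mul]
    have hset : {y : (ZMod (p ^ r))ˣ | ∃ n : ℤ, y = g ^ n * x}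
        = (fun h => h * x) '' ((zpowers g : Subgroup _) : Set _) := by
      ext y
      constructor
      · rintro ⟨k, rfl⟩; exact ⟨g ^ k, ⟨k, rfl⟩, rfl⟩
      · rintro ⟨h, ⟨k, rfl⟩, rfl⟩; exact ⟨k, rfl⟩
    rw [hset, Set.ncard_image_of_injective _ (fun u v huv => mul_right_cancel huv),
      ← Nat.card_coe_set_eq, SetLike.coe_sort_coe, Nat.card_zpowers]
  · -- 2-coloring
    intro hEven
    refine ⟨SimpleGraph.Coloring.mk
      (fun x => (⟨(n x).val % 2, Nat.mod_lt _ (by omega)⟩ : Fin 2)) ?_⟩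
    intro u v hadj
    rw [SimpleGraph.fromRel_adj] at hadj
    obtain ⟨hneq, h | h⟩ := hadj
    · subst h
      simp only [ne_eq, Fin.mk.injEq]
      rw [hval u]
      exact (natkey2_stmt17 _ _ hEven hm2 (hvlt u)).symm
    · subst h
      simp only [ne_eq, Fin.mk.injEq]
      rw [hval v]
      exact natkey2_stmt17 _ _ hEven hm2 (hvlt v)
  · -- 3-coloring
    refine ⟨SimpleGraph.Coloring.mk
      (fun x => (⟨if (n x).val = orderOf g - 1 then 2 else (n x).val % 2,
        by split <;> omega⟩ : Fin 3)) ?_⟩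
    intro u v hadj
    rw [SimpleGraph.fromRel_adj] at hadj
    obtain ⟨hneq, h | h⟩ := hadj
    · subst h
      simp only [ne_eq, Fin.mk.injEq]
      rw [hval u]
      exact (natkey3_stmt17 _ _ hm2 (hvlt u)).symm
    · subst h
      simp only [ne_eq, Fin.mk.injEq]
      rw [hval v]
      exact natkey3_stmt17 _ _ hm2 (hvlt v)
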